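/- arXiv:1503.08594 — 2 statements merged into one kernel-verified Lean document; each statement's English description precedes it below -/
import Mathlib

section
/- Assume m = 2. For every K > 0 and every δ > 0 there exist a constant B > 0 (depending on p₁, p₂, K and δ) and r₀ > 0 such that for every 0 < r < r₀ there is a measurable set E ⊆ [−1/2, 1/2] of Lebesgue measure at most B·r^{1−δ} with the property that Σ_{h ∈ S(r)} ‖hy‖² ≥ K · log(1/r) for every y ∈ [−1/2, 1/2] \ E. -/
set_option maxHeartbeats 1000000

open Filter Set MeasureTheory

noncomputable section

/-- The multiplicative monoid generated by the bases `p 0, …, p (m-1)`. -/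
def multiS (m : ℕ) (p : Fin m → ℕ) : Set ℕ :=
  {h | ∃ α : Fin m → ℕ, h = ∏ j, p j ^ α j}

/-- `S(r) = {h ∈ S : h·r ≤ 1}`. -/
def multiSr (m : ℕ) (p : Fin m → ℕ) (r : ℝ) : Set ℕ :=
  {h | h ∈ multiS m p ∧ (h : ℝ) * r ≤ 1}

/-- The distance from a real number to the nearest integer. -/
def nintDist (x : ℝ) : ℝ := |x - round x|

lemma nintDist_def (x : ℝ) : nintDist x = |x - round x| := rfl

lemma nintDist_nonneg (x : ℝ) : 0 ≤ nintDist x := abs_nonneg _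

lemma nintDist_le_half (x : ℝ) : nintDist x ≤ 1/2 := abs_sub_round x

lemma nintDist_le_int (x : ℝ) (k : ℤ) : nintDist x ≤ |x - k| := round_le x k

lemma nintDist_int_add (k : ℤ) (x : ℝ) : nintDist ((k:ℝ) + x) = nintDist x := by
  unfold nintDist
  rw [round_intCast_add]
  push_cast
  ring_nf

lemma nintDist_eq_abs {x : ℝ} (h : |x| < 1/2) : nintDist x = |x| := by
  unfold nintDist
  rw [round_eq_zero_iff.2]
  · simp
  · constructor
    · nlinarith [abs_nonneg x, neg_abs_le x]
    · nlinarith [le_abs_self x]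

lemma nintDist_nat_mul {x : ℝ} (n : ℕ) (h : (n:ℝ) * nintDist x < 1/2) :
    nintDist ((n:ℝ) * x) = n * nintDist x := by
  have hx : (n:ℝ) * x = ((n * round x : ℤ) : ℝ) + (n:ℝ) * (x - round x) := by
    push_cast; ring
  rw [hx, nintDist_int_add, nintDist_eq_abs, abs_mul, Nat.abs_cast]
  · rfl
  · rw [abs_mul, Nat.abs_cast]
    exact h

lemma nintDist_lt_int {x ε : ℝ} (k : ℤ) (h : |x - k| < ε) : nintDist x < ε :=
  lt_of_le_of_lt (nintDist_le_int x k) h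

/-- chain lemma -/
lemma chain_lemma {P : ℕ} (hP : 2 ≤ P) :
    ∀ (ℓ : ℕ) (u : ℝ), (∀ i, i < ℓ → nintDist ((P:ℝ)^i * u) < (2*(P:ℝ))⁻¹) →
      nintDist u ≤ (1/2) * ((P:ℝ)⁻¹)^ℓ := by
  have hP0 : (0:ℝ) < P := by positivity
  intro ℓ
  induction ℓ with
  | zero => intro u _; simpa using nintDist_le_half u
  | succ ℓ ih =>
    intro u h
    have h0 : nintDist u < (2*(P:ℝ))⁻¹ := by simpa using h 0 (Nat.succ_pos ℓ)
    have heq : nintDist ((P:ℝ) * u) = P * nintDist u := by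
      have := nintDist_nat_mul (x := u) P (by
        have : (P:ℝ) * nintDist u < (P:ℝ) * (2*(P:ℝ))⁻¹ := by
          exact mul_lt_mul_of_pos_left h0 hP0
        have h2 : (P:ℝ) * (2*(P:ℝ))⁻¹ = 1/2 := by
          field_simp
        linarith [this])
      exact this
    have hPu := ih ((P:ℝ) * u) (by
      intro i hi
      have := h (i+1) (by omega)
      have hre : (P:ℝ)^(i+1) * u = (P:ℝ)^i * ((P:ℝ) * u) := by ring
      rwa [hre] at this)
    rw [heq] at hPu
    have : nintDist u ≤ (1/2) * ((P:ℝ)⁻¹)^ℓ / P := by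
      rw [le_div_iff₀ hP0]
      linarith [hPu]
    calc nintDist u ≤ (1/2) * ((P:ℝ)⁻¹)^ℓ / P := this
      _ = (1/2) * ((P:ℝ)⁻¹)^(ℓ+1) := by
          rw [pow_succ]; field_simp


lemma cover_meas {M η c L : ℝ} (hM : 1 ≤ M) (hη : 0 < η) (hη2 : η ≤ 1/2) (hL : 0 ≤ L)
    (W : Set ℝ) (bound : ℝ) (hbound : 0 ≤ bound)
    (hW : ∀ c' : ℝ, volume (Icc c' (c' + 2*η/M) ∩ W) ≤ ENNReal.ofReal bound) :
    volume ({y ∈ Icc c (c+L) | nintDist (M*y) ≤ η} ∩ W)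
      ≤ ENNReal.ofReal ((M*L+2) * bound) := by
  have hM0 : (0:ℝ) < M := lt_of_lt_of_le one_pos hM
  set lo : ℤ := ⌈M*c - 1/2⌉ with hlo
  set hi : ℤ := ⌊M*(c+L) + 1/2⌋ with hhi
  have hsub : {y ∈ Icc c (c+L) | nintDist (M*y) ≤ η} ∩ W ⊆
      ⋃ k ∈ Finset.Icc lo hi, (Icc (((k:ℝ)-η)/M) (((k:ℝ)-η)/M + 2*η/M) ∩ W) := by
    rintro y ⟨⟨⟨hyc, hycL⟩, hyd⟩, hyW⟩
    rw [nintDist_def] at hyd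
    set k : ℤ := round (M*y) with hk
    have habs : |M*y - k| ≤ η := hyd
    have h1 : M*y - k ≤ η := (abs_le.1 habs).2
    have h2 : -η ≤ M*y - k := (abs_le.1 habs).1
    simp only [Set.mem_iUnion, Finset.mem_Icc, exists_prop]
    refine ⟨k, ⟨?_, ?_⟩, ?_⟩
    ·
      rw [hlo]
      apply Int.ceil_le.2
      have : M*c ≤ M*y := by nlinarith
      nlinarith
    · rw [hhi]
      apply Int.le_floor.2
      have : M*y ≤ M*(c+L) := by nlinarith
      nlinarith
    · refine ⟨⟨?_, ?_⟩, hyW⟩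
      · rw [div_le_iff₀ hM0]; nlinarith
      · rw [← add_div, le_div_iff₀ hM0]; nlinarith
  calc volume ({y ∈ Icc c (c+L) | nintDist (M*y) ≤ η} ∩ W)
      ≤ volume (⋃ k ∈ Finset.Icc lo hi, (Icc (((k:ℝ)-η)/M) (((k:ℝ)-η)/M + 2*η/M) ∩ W)) :=
        measure_mono hsub
    _ ≤ ∑ k ∈ Finset.Icc lo hi, volume (Icc (((k:ℝ)-η)/M) (((k:ℝ)-η)/M + 2*η/M) ∩ W) :=
        measure_biUnion_finset_le _ _
    _ ≤ ∑ _k ∈ Finset.Icc lo hi, ENNReal.ofReal bound :=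
        Finset.sum_le_sum (fun k _ => hW _)
    _ = ((Finset.Icc lo hi).card : ENNReal) * ENNReal.ofReal bound := by
        rw [Finset.sum_const, nsmul_eq_mul]
    _ ≤ ENNReal.ofReal (M*L+2) * ENNReal.ofReal bound := by
        gcongr
        rw [← ENNReal.ofReal_natCast]
        apply ENNReal.ofReal_le_ofReal
        have hcard : (Finset.Icc lo hi).card = (hi + 1 - lo).toNat := Int.card_Icc lo hi
        rw [hcard]
        rcases le_or_gt (hi + 1 - lo) 0 with hneg | hpos
        · have : (hi + 1 - lo).toNat = 0 := Int.toNat_of_nonpos hneg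
          rw [this]; norm_num; nlinarith
        · have h0 : ((hi + 1 - lo).toNat : ℤ) = hi + 1 - lo :=
            Int.toNat_of_nonneg (le_of_lt hpos)
          have h1 : ((hi + 1 - lo).toNat : ℝ) = ((hi:ℝ) + 1 - lo) := by
            have := congrArg (fun z : ℤ => (z : ℝ)) h0
            push_cast at this
            linarith [this]
          rw [h1]
          have hf : (hi:ℝ) ≤ M*(c+L) + 1/2 := Int.floor_le _
          have hc : M*c - 1/2 ≤ (lo:ℝ) := Int.le_ceil _
          nlinarith
    _ = ENNReal.ofReal ((M*L+2) * bound) := by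
        rw [ENNReal.ofReal_mul (by nlinarith)]

/-- The set of `y` such that `nintDist (M * P^a * y) < ε` for all `a < A` outside an
exceptional set of at most `n` indices. -/
def pattSet (P : ℕ) (ε : ℝ) (A n : ℕ) (M : ℝ) : Set ℝ :=
  {y | ∃ F : Finset ℕ, F.card ≤ n ∧ ∀ a, a < A → a ∉ F → nintDist (M * (P:ℝ)^a * y) < ε}

lemma rec_meas {P : ℕ} (hP : 2 ≤ P) (D : ℝ) :
    ∀ (n A : ℕ) (M c L : ℝ), 1 ≤ M → 0 ≤ L →
      (((P:ℝ)+2) * A + (P:ℝ) + 1 ≤ D * P) →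
      volume (Icc c (c+L) ∩ pattSet P ((2*(P:ℝ))⁻¹) A n M)
        ≤ ENNReal.ofReal ((M*L+2) * D^n * (P:ℝ)^n * ((P:ℝ)⁻¹)^A / M) := by
  have hP0 : (0:ℝ) < P := by positivity
  have hP1 : (1:ℝ) ≤ P := by exact_mod_cast Nat.one_le_of_lt hP
  have hPinv : (0:ℝ) < (P:ℝ)⁻¹ := by positivity
  have hPinv1 : (P:ℝ)⁻¹ ≤ 1 := by
    rw [inv_le_one_iff₀]; right; exact hP1
  intro n
  induction n with
  | zero =>
    intro A M c L hM hL _hD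
    have hM0 : (0:ℝ) < M := lt_of_lt_of_le one_pos hM
    -- every y in the set satisfies nintDist (M*y) ≤ (1/2) * (P⁻¹)^A
    have hsub : Icc c (c+L) ∩ pattSet P ((2*(P:ℝ))⁻¹) A 0 M ⊆
        {y ∈ Icc c (c+L) | nintDist (M*y) ≤ (1/2) * ((P:ℝ)⁻¹)^A} := by
      rintro y ⟨hyI, F, hFcard, hsmall⟩
      refine ⟨hyI, ?_⟩
      have hF : F.card = 0 := Nat.le_zero.1 hFcard
      have hFe : F = ∅ := Finset.card_eq_zero.1 hF
      apply chain_lemma hP A (M * y)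
      intro i hi
      have := hsmall i hi (by rw [hFe]; exact Finset.notMem_empty i)
      calc nintDist ((P:ℝ)^i * (M*y)) = nintDist (M * (P:ℝ)^i * y) := by ring_nf
        _ < (2*(P:ℝ))⁻¹ := this
    have hη : (0:ℝ) < (1/2) * ((P:ℝ)⁻¹)^A := by positivity
    have hη2 : (1/2) * ((P:ℝ)⁻¹)^A ≤ 1/2 := by
      have : ((P:ℝ)⁻¹)^A ≤ 1 := pow_le_one₀ (le_of_lt hPinv) hPinv1
      nlinarith
    have := cover_meas (c := c) hM hη hη2 hL univ (2*((1/2) * ((P:ℝ)⁻¹)^A)/M)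
      (by positivity) (fun c' => by
        rw [Set.inter_univ, Real.volume_Icc]
        apply ENNReal.ofReal_le_ofReal
        apply le_of_eq; ring)
    calc volume (Icc c (c+L) ∩ pattSet P ((2*(P:ℝ))⁻¹) A 0 M)
        ≤ volume ({y ∈ Icc c (c+L) | nintDist (M*y) ≤ (1/2) * ((P:ℝ)⁻¹)^A} ∩ univ) := by
          rw [Set.inter_univ]; exact measure_mono hsub
      _ ≤ ENNReal.ofReal ((M*L+2) * (2*((1/2) * ((P:ℝ)⁻¹)^A)/M)) := this
      _ = ENNReal.ofReal ((M*L+2) * D^0 * (P:ℝ)^0 * ((P:ℝ)⁻¹)^A / M) := by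
          congr 1; field_simp
  | succ n ih =>
    intro A M c L hM hL hD
    have hM0 : (0:ℝ) < M := lt_of_lt_of_le one_pos hM
    have hD1 : (1:ℝ) ≤ D := by nlinarith
    set ε : ℝ := (2*(P:ℝ))⁻¹ with hε
    set bound : ℝ := ((P:ℝ)+2) * D^n * (P:ℝ)^n * ((P:ℝ)⁻¹)^A / M with hbound
    have hbound0 : 0 ≤ bound := by positivity
    -- the cover
    have hsub : Icc c (c+L) ∩ pattSet P ε A (n+1) M ⊆
        (⋃ ℓ ∈ Finset.range A, ({y ∈ Icc c (c+L) | nintDist (M*y) ≤ (1/2) * ((P:ℝ)⁻¹)^ℓ}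
            ∩ pattSet P ε (A-ℓ-1) n (M*(P:ℝ)^(ℓ+1))))
        ∪ {y ∈ Icc c (c+L) | nintDist (M*y) ≤ (1/2) * ((P:ℝ)⁻¹)^A} := by
      rintro y ⟨hyI, F, hFcard, hsmall⟩
      by_cases hF' : F.filter (· < A) = ∅
      · right
        refine ⟨hyI, ?_⟩
        apply chain_lemma hP A (M*y)
        intro i hi
        have hiF : i ∉ F := by
          intro hiF
          have : i ∈ F.filter (· < A) := Finset.mem_filter.2 ⟨hiF, by simpa using hi⟩
          rw [hF'] at this
          exact Finset.notMem_empty i this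
        have := hsmall i hi hiF
        calc nintDist ((P:ℝ)^i * (M*y)) = nintDist (M * (P:ℝ)^i * y) := by ring_nf
          _ < ε := this
      · left
        have hFne : (F.filter (· < A)).Nonempty := Finset.nonempty_of_ne_empty hF'
        set ℓ : ℕ := (F.filter (· < A)).min' hFne with hℓ
        have hℓmem : ℓ ∈ F.filter (· < A) := Finset.min'_mem _ _
        have hℓF : ℓ ∈ F := (Finset.mem_filter.1 hℓmem).1
        have hℓA : ℓ < A := by simpa using (Finset.mem_filter.1 hℓmem).2
        simp only [Set.mem_iUnion, Finset.mem_range, exists_prop]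
        refine ⟨ℓ, hℓA, ⟨hyI, ?_⟩, ?_⟩
        · -- first run gives smallness
          apply chain_lemma hP ℓ (M*y)
          intro i hi
          have hiF : i ∉ F := by
            intro hiF
            have hmem : i ∈ F.filter (· < A) := Finset.mem_filter.2 ⟨hiF, by omega⟩
            have := Finset.min'_le _ i hmem
            omega
          have := hsmall i (by omega) hiF
          calc nintDist ((P:ℝ)^i * (M*y)) = nintDist (M * (P:ℝ)^i * y) := by ring_nf
            _ < ε := this
        · -- shifted pattern
          refine ⟨(F.erase ℓ).image (fun a => a - (ℓ+1)), ?_, ?_⟩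
          · calc ((F.erase ℓ).image (fun a => a - (ℓ+1))).card ≤ (F.erase ℓ).card :=
                Finset.card_image_le
              _ = F.card - 1 := Finset.card_erase_of_mem hℓF
              _ ≤ n := by
                  have hFpos : 1 ≤ F.card := Finset.card_pos.2 ⟨ℓ, hℓF⟩
                  omega
          · intro a ha haF
            have ha' : a + ℓ + 1 < A := by omega
            have hnotF : a + ℓ + 1 ∉ F := by
              intro hmem
              apply haF
              refine Finset.mem_image.2 ⟨a + ℓ + 1, ?_, by omega⟩
              exact Finset.mem_erase.2 ⟨by omega, hmem⟩
            have := hsmall (a+ℓ+1) ha' hnotF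
            calc nintDist ((M*(P:ℝ)^(ℓ+1)) * (P:ℝ)^a * y)
                = nintDist (M * (P:ℝ)^(a+ℓ+1) * y) := by
                  rw [show a+ℓ+1 = (ℓ+1)+a by omega, pow_add]; ring_nf
              _ < ε := this
    -- measure bounds
    have hmeas : volume (Icc c (c+L) ∩ pattSet P ε A (n+1) M) ≤
        (∑ ℓ ∈ Finset.range A, volume ({y ∈ Icc c (c+L) | nintDist (M*y) ≤ (1/2) * ((P:ℝ)⁻¹)^ℓ}
            ∩ pattSet P ε (A-ℓ-1) n (M*(P:ℝ)^(ℓ+1))))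
        + volume {y ∈ Icc c (c+L) | nintDist (M*y) ≤ (1/2) * ((P:ℝ)⁻¹)^A} := by
      calc volume (Icc c (c+L) ∩ pattSet P ε A (n+1) M) ≤ _ := measure_mono hsub
        _ ≤ _ := measure_union_le _ _
        _ ≤ _ := by
            gcongr
            exact measure_biUnion_finset_le _ _
    -- bound each ℓ-term
    have hterm : ∀ ℓ ∈ Finset.range A,
        volume ({y ∈ Icc c (c+L) | nintDist (M*y) ≤ (1/2) * ((P:ℝ)⁻¹)^ℓ}
            ∩ pattSet P ε (A-ℓ-1) n (M*(P:ℝ)^(ℓ+1)))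
          ≤ ENNReal.ofReal ((M*L+2) * bound) := by
      intro ℓ hℓ
      have hℓA : ℓ < A := Finset.mem_range.1 hℓ
      have hη : (0:ℝ) < (1/2) * ((P:ℝ)⁻¹)^ℓ := by positivity
      have hη2 : (1/2) * ((P:ℝ)⁻¹)^ℓ ≤ 1/2 := by
        have : ((P:ℝ)⁻¹)^ℓ ≤ 1 := pow_le_one₀ (le_of_lt hPinv) hPinv1
        nlinarith
      apply cover_meas hM hη hη2 hL _ bound hbound0
      intro c'
      have hM' : (1:ℝ) ≤ M*(P:ℝ)^(ℓ+1) := by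
        have h1 : (1:ℝ) ≤ (P:ℝ)^(ℓ+1) := one_le_pow₀ hP1
        nlinarith
      have hD' : ((P:ℝ)+2) * (A-ℓ-1 : ℕ) + (P:ℝ) + 1 ≤ D * P := by
        have hle0 : A-ℓ-1 ≤ A := by omega
        have hle : ((A-ℓ-1 : ℕ) : ℝ) ≤ (A:ℝ) := Nat.cast_le.2 hle0
        nlinarith
      have := ih (A-ℓ-1) (M*(P:ℝ)^(ℓ+1)) c' (2*((1/2) * ((P:ℝ)⁻¹)^ℓ)/M) hM'
        (by positivity) hD'
      refine le_trans this (le_of_eq (congrArg ENNReal.ofReal ?_))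
      have hAeq : (ℓ+1) + (A-ℓ-1) = A := by omega
      rw [hbound]
      rw [show ((P:ℝ)⁻¹)^A = ((P:ℝ)⁻¹)^(ℓ+1) * ((P:ℝ)⁻¹)^(A-ℓ-1) by
        rw [← pow_add, hAeq]]
      have hPl : (0:ℝ) < (P:ℝ)^(ℓ+1) := by positivity
      field_simp
      have hX : (P:ℝ)^ℓ * ((P:ℝ)⁻¹)^ℓ = 1 := by
        rw [← mul_pow, mul_inv_cancel₀ hP0.ne', one_pow]
      have hu : (P:ℝ) * (P:ℝ)⁻¹ = 1 := mul_inv_cancel₀ hP0.ne'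
      linear_combination (-(2 + (P:ℝ) * ((P:ℝ)^ℓ * ((P:ℝ)⁻¹)^ℓ))) * hu
        - 2 * ((P:ℝ) * (P:ℝ)⁻¹) * hX
    have hlast : volume {y ∈ Icc c (c+L) | nintDist (M*y) ≤ (1/2) * ((P:ℝ)⁻¹)^A}
        ≤ ENNReal.ofReal ((M*L+2) * (((P:ℝ)⁻¹)^A / M)) := by
      have hη : (0:ℝ) < (1/2) * ((P:ℝ)⁻¹)^A := by positivity
      have hη2 : (1/2) * ((P:ℝ)⁻¹)^A ≤ 1/2 := by
        have : ((P:ℝ)⁻¹)^A ≤ 1 := pow_le_one₀ (le_of_lt hPinv) hPinv1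
        nlinarith
      have := cover_meas (c := c) hM hη hη2 hL univ (((P:ℝ)⁻¹)^A / M)
        (by positivity) (fun c' => by
          rw [Set.inter_univ, Real.volume_Icc]
          apply ENNReal.ofReal_le_ofReal
          apply le_of_eq; field_simp; ring)
      calc volume {y ∈ Icc c (c+L) | nintDist (M*y) ≤ (1/2) * ((P:ℝ)⁻¹)^A}
          = volume ({y ∈ Icc c (c+L) | nintDist (M*y) ≤ (1/2) * ((P:ℝ)⁻¹)^A} ∩ univ) := by
            rw [Set.inter_univ]
        _ ≤ _ := this
    -- combine
    have hkey : (A:ℝ) * (((P:ℝ)+2) * D^n * (P:ℝ)^n) + 1 ≤ D^(n+1) * (P:ℝ)^(n+1) := by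
      have h1 : (1:ℝ) ≤ D^n := one_le_pow₀ hD1
      have h2 : (1:ℝ) ≤ (P:ℝ)^n := one_le_pow₀ hP1
      have hA0 : (0:ℝ) ≤ (A:ℝ) := Nat.cast_nonneg A
      have hexp : D^(n+1) * (P:ℝ)^(n+1) = (D*(P:ℝ)) * (D^n * (P:ℝ)^n) := by ring
      rw [hexp]
      have hDP : ((P:ℝ)+2) * A + (P:ℝ) + 1 ≤ D * P := hD
      have h12 : (1:ℝ) ≤ D^n * (P:ℝ)^n := by nlinarith
      have hstep := mul_le_mul_of_nonneg_right hDP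
        (le_trans zero_le_one h12 : (0:ℝ) ≤ D^n * (P:ℝ)^n)
      nlinarith [h12, hstep, hP1, hA0]
    calc volume (Icc c (c+L) ∩ pattSet P ε A (n+1) M) ≤ _ := hmeas
      _ ≤ (∑ _ℓ ∈ Finset.range A, ENNReal.ofReal ((M*L+2) * bound))
            + ENNReal.ofReal ((M*L+2) * (((P:ℝ)⁻¹)^A / M)) := by
          exact add_le_add (Finset.sum_le_sum hterm) hlast
      _ = ENNReal.ofReal ((A:ℝ) * ((M*L+2) * bound))
            + ENNReal.ofReal ((M*L+2) * (((P:ℝ)⁻¹)^A / M)) := by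
          rw [Finset.sum_const, Finset.card_range, nsmul_eq_mul]
          congr 1
          rw [ENNReal.ofReal_mul (by positivity : (0:ℝ) ≤ (A:ℝ))]
          rw [ENNReal.ofReal_natCast]
      _ = ENNReal.ofReal ((A:ℝ) * ((M*L+2) * bound) + (M*L+2) * (((P:ℝ)⁻¹)^A / M)) := by
          rw [ENNReal.ofReal_add (by positivity) (by positivity)]
      _ ≤ ENNReal.ofReal ((M*L+2) * D^(n+1) * (P:ℝ)^(n+1) * ((P:ℝ)⁻¹)^A / M) := by
          apply ENNReal.ofReal_le_ofReal
          have hfac : (0:ℝ) ≤ (M*L+2) * (((P:ℝ)⁻¹)^A / M) := by positivity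
          have heq1 : (A:ℝ) * ((M*L+2) * bound) + (M*L+2) * (((P:ℝ)⁻¹)^A / M)
              = ((M*L+2) * (((P:ℝ)⁻¹)^A / M)) * ((A:ℝ) * (((P:ℝ)+2) * D^n * (P:ℝ)^n) + 1) := by
            rw [hbound]; field_simp
          have heq2 : (M*L+2) * D^(n+1) * (P:ℝ)^(n+1) * ((P:ℝ)⁻¹)^A / M
              = ((M*L+2) * (((P:ℝ)⁻¹)^A / M)) * (D^(n+1) * (P:ℝ)^(n+1)) := by
            field_simp
          rw [heq1, heq2]
          exact mul_le_mul_of_nonneg_left hkey hfac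

lemma measurable_nintDist : Measurable nintDist := by
  have h1 : Measurable fun x : ℝ => ((round x : ℤ) : ℝ) := by
    have : (fun x : ℝ => ((round x : ℤ) : ℝ)) = fun x => ((⌊x + 1/2⌋ : ℤ) : ℝ) := by
      funext x; rw [round_eq]
    rw [this]
    exact measurable_from_top.comp
      (Int.measurable_floor.comp (measurable_id.add_const _))
  exact (measurable_id.sub h1).abs

lemma measurableSet_pattSet (P : ℕ) (ε : ℝ) (A n : ℕ) (M : ℝ) :
    MeasurableSet (pattSet P ε A n M) := by
  have : pattSet P ε A n M = ⋃ (F : Finset ℕ), ⋃ (_ : F.card ≤ n),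
      ⋂ (a : ℕ), ⋂ (_ : a < A), ⋂ (_ : a ∉ F), {y | nintDist (M * (P:ℝ)^a * y) < ε} := by
    ext y
    simp only [pattSet, Set.mem_setOf_eq, Set.mem_iUnion, Set.mem_iInter, exists_prop]
  rw [this]
  apply MeasurableSet.iUnion
  intro F
  apply MeasurableSet.iUnion
  intro _
  apply MeasurableSet.iInter
  intro a
  apply MeasurableSet.iInter
  intro _
  apply MeasurableSet.iInter
  intro _
  exact measurableSet_lt (measurable_nintDist.comp (measurable_const_mul _)) measurable_const

lemma pow_mul_pow_inj {P Q : ℕ} (hP : 2 ≤ P) (hQ : 2 ≤ Q) (hco : Nat.Coprime P Q)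
    (a b a' b' : ℕ) (h : P^a * Q^b = P^a' * Q^b') : a = a' ∧ b = b' := by
  have key : ∀ x y x' y' : ℕ, P^x * Q^y = P^x' * Q^y' → x ≤ x' := by
    intro x y x' y' heq
    have hdvd : P^x ∣ P^x' * Q^y' := ⟨Q^y, heq.symm.trans (by ring)⟩
    have hcop : Nat.Coprime (P^x) (Q^y') := Nat.Coprime.pow x y' hco
    have : P^x ∣ P^x' := (Nat.Coprime.dvd_of_dvd_mul_right hcop hdvd)
    exact (Nat.pow_dvd_pow_iff_le_right (by omega)).1 this
  have haa : a = a' := le_antisymm (key a b a' b' h) (key a' b' a b h.symm)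
  subst haa
  have hPa : 0 < P^a := Nat.pow_pos (by omega)
  have hQQ : Q^b = Q^b' := Nat.eq_of_mul_eq_mul_left hPa h
  exact ⟨rfl, Nat.pow_right_injective hQ hQQ⟩

theorem multiSr_sum_lower_bound_outside_small_set (p : Fin 2 → ℕ)
    (hp : ∀ j, 1 < p j) (hmono : StrictMono p)
    (hcop : ∀ i j, i ≠ j → Nat.Coprime (p i) (p j)) :
    ∀ K > (0 : ℝ), ∀ δ > (0 : ℝ), ∃ B > (0 : ℝ), ∃ r₀ > (0 : ℝ),
      ∀ r : ℝ, 0 < r → r < r₀ →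
        ∃ E : Set ℝ, MeasurableSet E ∧ E ⊆ Set.Icc (-(1 / 2) : ℝ) (1 / 2) ∧
          volume E ≤ ENNReal.ofReal (B * r ^ ((1 : ℝ) - δ)) ∧
          ∀ y ∈ Set.Icc (-(1 / 2) : ℝ) (1 / 2) \ E,
            K * Real.log (1 / r) ≤ ∑' h : multiSr 2 p r, nintDist ((h : ℕ) * y) ^ 2 := by
  classical
  intro K hK δ hδ
  obtain ⟨P, hPdef⟩ : ∃ n : ℕ, n = p 0 := ⟨p 0, rfl⟩
  obtain ⟨Q, hQdef⟩ : ∃ n : ℕ, n = p 1 := ⟨p 1, rfl⟩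
  have hP2 : 2 ≤ P := by rw [hPdef]; exact hp 0
  have hQP : P < Q := by rw [hPdef, hQdef]; exact hmono (show (0 : Fin 2) < 1 by decide)
  have hQ3 : 3 ≤ Q := by omega
  have hcoPQ : Nat.Coprime P Q := by rw [hPdef, hQdef]; exact hcop 0 1 (by decide)
  have hP0 : (0:ℝ) < P := by
    have : 0 < P := by omega
    exact_mod_cast this
  have hP1R : (1:ℝ) ≤ P := by exact_mod_cast Nat.one_le_of_lt hP2
  have hP2R : (2:ℝ) ≤ P := by exact_mod_cast hP2
  have hQ3R : (3:ℝ) ≤ Q := by exact_mod_cast hQ3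
  have hQ1R : (1:ℝ) ≤ Q := by linarith
  obtain ⟨ε, hεdef⟩ : ∃ x : ℝ, x = (2*(P:ℝ))⁻¹ := ⟨_, rfl⟩
  have hε0 : 0 < ε := by rw [hεdef]; positivity
  obtain ⟨δ', hδ'0, hδ'le, hδ'δlt⟩ : ∃ x : ℝ, 0 < x ∧ x ≤ 1/2 ∧ x < δ := by
    refine ⟨min δ 1 / 2, by positivity, ?_, ?_⟩
    · have := min_le_right δ 1; linarith
    · have := min_le_left δ 1
      have := lt_min hδ one_pos
      linarith
  have hδ'1 : δ' < 1 := by linarith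
  have hcc0 : 0 < δ - δ' := by linarith
  have hlogP : 0 < Real.log P := Real.log_pos (by linarith)
  have hlog2 : (0.6931471803 : ℝ) < Real.log 2 := Real.log_two_gt_d9
  have hlogP2 : Real.log 2 ≤ Real.log P := Real.log_le_log (by norm_num) hP2R
  have hlogQ1 : 1 ≤ Real.log Q := by
    have h1 : Real.exp 1 ≤ (Q:ℝ) := by
      have := Real.exp_one_lt_d9
      linarith
    calc (1:ℝ) = Real.log (Real.exp 1) := (Real.log_exp 1).symm
      _ ≤ Real.log Q := Real.log_le_log (Real.exp_pos 1) h1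
  have hlogQ0 : 0 < Real.log Q := by linarith
  obtain ⟨nst, hnstge⟩ : ∃ n : ℕ, K * Real.log Q / (ε^2 * δ') ≤ (n:ℝ) :=
    ⟨⌈K * Real.log Q / (ε^2 * δ')⌉₊, Nat.le_ceil _⟩
  obtain ⟨m, hmdef⟩ : ∃ m : ℕ, m = nst + 1 := ⟨_, rfl⟩
  have hm0 : (0:ℝ) < m := by rw [hmdef]; positivity
  obtain ⟨C4, hC4eq⟩ : ∃ x : ℝ, x = (max 1 ((m:ℝ)/(δ - δ')))^m := ⟨_, rfl⟩
  have hC40 : 0 < C4 := by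
    rw [hC4eq]
    have h1 : (0:ℝ) < max 1 ((m:ℝ)/(δ - δ')) := lt_of_lt_of_le one_pos (le_max_left _ _)
    positivity
  obtain ⟨B, hBeq⟩ : ∃ x : ℝ, x = 3 * 4^nst * (P:ℝ)^nst * C4 + 1 := ⟨_, rfl⟩
  have hB0 : 0 < B := by
    rw [hBeq]
    positivity
  refine ⟨B, hB0, 1/2, by norm_num, ?_⟩
  intro r hr0 hr
  obtain ⟨T, hTdef⟩ : ∃ t : ℝ, t = Real.log (1/r) := ⟨_, rfl⟩
  have hr1 : (1:ℝ) < 1/r := by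
    rw [lt_div_iff₀ hr0]; linarith only [hr, hr0]
  have hT0 : 0 < T := by rw [hTdef]; exact Real.log_pos hr1
  have hexpT : Real.exp T = 1/r := by rw [hTdef]; exact Real.exp_log (by positivity)
  have hxpos : (0:ℝ) ≤ (1-δ') * T / Real.log P :=
    div_nonneg (by nlinarith only [hδ'1, hT0]) (le_of_lt hlogP)
  have hypos : (0:ℝ) ≤ δ' * T / Real.log Q :=
    div_nonneg (by nlinarith only [hδ'0, hT0]) (le_of_lt hlogQ0)
  obtain ⟨A1, hA1le, hA1gt⟩ : ∃ n : ℕ, (n:ℝ) ≤ (1-δ') * T / Real.log P ∧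
      (1-δ') * T / Real.log P < (n:ℝ) + 1 :=
    ⟨⌊(1-δ') * T / Real.log P⌋₊, Nat.floor_le hxpos, Nat.lt_floor_add_one _⟩
  obtain ⟨A, hAdef⟩ : ∃ n : ℕ, n = A1 + 1 := ⟨_, rfl⟩
  have hAcast : (A:ℝ) = (A1:ℝ) + 1 := by rw [hAdef]; push_cast; ring
  obtain ⟨B', hB'le, hB'gt⟩ : ∃ n : ℕ, (n:ℝ) ≤ δ' * T / Real.log Q ∧
      δ' * T / Real.log Q < (n:ℝ) + 1 :=
    ⟨⌊δ' * T / Real.log Q⌋₊, Nat.floor_le hypos, Nat.lt_floor_add_one _⟩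
  obtain ⟨D, hDdef⟩ : ∃ x : ℝ, x = 2*(A:ℝ) + 2 := ⟨_, rfl⟩
  -- power estimates
  have hexp_pow : ∀ (x : ℕ) (n : ℕ), (2:ℝ) ≤ (x:ℝ) → ((x:ℝ))^n = Real.exp (n * Real.log x) := by
    intro x n hx
    rw [← Real.exp_log (show (0:ℝ) < (x:ℝ) by linarith only [hx]), ← Real.exp_nat_mul, Real.log_exp]
  have hPA1 : ∀ a : ℕ, a ≤ A1 → (P:ℝ)^a ≤ Real.exp ((1-δ') * T) := by
    intro a ha
    rw [hexp_pow P a hP2R]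
    apply Real.exp_le_exp.2
    have h1 : (a:ℝ) ≤ (1-δ') * T / Real.log P := by
      calc (a:ℝ) ≤ (A1:ℝ) := by exact_mod_cast ha
        _ ≤ _ := hA1le
    calc (a:ℝ) * Real.log P ≤ ((1-δ') * T / Real.log P) * Real.log P :=
        mul_le_mul_of_nonneg_right h1 (le_of_lt hlogP)
      _ = (1-δ') * T := by field_simp
  have hQB' : ∀ b : ℕ, b ≤ B' → (Q:ℝ)^b ≤ Real.exp (δ' * T) := by
    intro b hb
    rw [hexp_pow Q b (by linarith only [hQ3R])]
    apply Real.exp_le_exp.2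
    have h1 : (b:ℝ) ≤ δ' * T / Real.log Q := by
      calc (b:ℝ) ≤ (B':ℝ) := by exact_mod_cast hb
        _ ≤ _ := hB'le
    calc (b:ℝ) * Real.log Q ≤ (δ' * T / Real.log Q) * Real.log Q :=
        mul_le_mul_of_nonneg_right h1 (le_of_lt hlogQ0)
      _ = δ' * T := by field_simp
  have hPAinv : ((P:ℝ)⁻¹)^A ≤ Real.exp (-((1-δ') * T)) := by
    have hPA : Real.exp ((1-δ') * T) ≤ (P:ℝ)^A := by
      rw [hexp_pow P A hP2R]
      apply Real.exp_le_exp.2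
      have h1 : (1-δ') * T / Real.log P ≤ (A:ℝ) := by
        rw [hAcast]; linarith only [hA1gt]
      calc (1-δ') * T = ((1-δ') * T / Real.log P) * Real.log P := by field_simp
        _ ≤ (A:ℝ) * Real.log P := mul_le_mul_of_nonneg_right h1 (le_of_lt hlogP)
    rw [inv_pow, inv_le_comm₀ (by positivity) (Real.exp_pos _), ← Real.exp_neg]
    simpa using hPA
  have hB'1le : ((B':ℝ) + 1) ≤ T + 1 := by
    have h2 : δ' * T / Real.log Q ≤ δ' * T := div_le_self (by positivity) hlogQ1
    have h3 : δ' * T ≤ T := by nlinarith only [hδ'le, hT0]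
    linarith only [hB'le, h2, h3]
  have hDle : D ≤ 4 * (T + 1) := by
    have h2 : (1-δ') * T / Real.log P ≤ T / Real.log 2 :=
      div_le_div₀ (by positivity) (by nlinarith only [hδ'0, hT0]) (by linarith only [hlog2]) hlogP2
    have h3 : T / Real.log 2 ≤ T * (3/2) := by
      rw [div_le_iff₀ (by linarith only [hlog2])]
      nlinarith only [hlog2, hT0]
    rw [hDdef, hAcast]
    linarith only [hA1le, h2, h3]
  have hD0 : 0 ≤ D := by rw [hDdef]; positivity
  have hDcond : ((P:ℝ)+2) * (A:ℝ) + (P:ℝ) + 1 ≤ D * P := by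
    have hA0 : (0:ℝ) ≤ (A:ℝ) := Nat.cast_nonneg A
    rw [hDdef]
    nlinarith only [hA0, hP2R]
  -- the exceptional set
  obtain ⟨E, hEdef⟩ : ∃ E : Set ℝ, E = ⋃ b ∈ Finset.range (B'+1),
      (Icc (-(1/2) : ℝ) (1/2) ∩ pattSet P ε A nst ((Q:ℝ)^b)) := ⟨_, rfl⟩
  have hIccEq : Icc (-(1/2) : ℝ) (1/2) = Icc (-(1/2) : ℝ) (-(1/2) + 1) := by norm_num
  refine ⟨E, ?_, ?_, ?_, ?_⟩
  · -- measurability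
    rw [hEdef]
    apply MeasurableSet.biUnion (Finset.range (B'+1)).countable_toSet
    intro b _
    exact measurableSet_Icc.inter (measurableSet_pattSet P ε A nst ((Q:ℝ)^b))
  · -- subset of Icc
    rw [hEdef]
    intro y hy
    simp only [Set.mem_iUnion] at hy
    obtain ⟨b, _, hy, _⟩ := hy
    exact hy
  · -- measure bound
    have hrow : ∀ b ∈ Finset.range (B'+1),
        volume (Icc (-(1/2) : ℝ) (1/2) ∩ pattSet P ε A nst ((Q:ℝ)^b))
          ≤ ENNReal.ofReal (3 * D^nst * (P:ℝ)^nst * ((P:ℝ)⁻¹)^A) := by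
      intro b _
      have hM1 : (1:ℝ) ≤ (Q:ℝ)^b := one_le_pow₀ hQ1R
      have hrm := rec_meas hP2 D nst A ((Q:ℝ)^b) (-(1/2)) 1 hM1 zero_le_one hDcond
      rw [← hIccEq, ← hεdef] at hrm
      refine le_trans hrm (ENNReal.ofReal_le_ofReal ?_)
      rw [div_le_iff₀ (by positivity : (0:ℝ) < (Q:ℝ)^b)]
      have h1 : (0:ℝ) ≤ D^nst * (P:ℝ)^nst * ((P:ℝ)⁻¹)^A := by positivity
      nlinarith only [mul_nonneg h1 (by linarith only [hM1] : (0:ℝ) ≤ (Q:ℝ)^b - 1)]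
    have hsum : volume E ≤ ENNReal.ofReal (((B':ℝ)+1) * (3 * D^nst * (P:ℝ)^nst * ((P:ℝ)⁻¹)^A)) := by
      rw [hEdef]
      calc volume (⋃ b ∈ Finset.range (B'+1),
            (Icc (-(1/2) : ℝ) (1/2) ∩ pattSet P ε A nst ((Q:ℝ)^b)))
          ≤ ∑ b ∈ Finset.range (B'+1),
            volume (Icc (-(1/2) : ℝ) (1/2) ∩ pattSet P ε A nst ((Q:ℝ)^b)) :=
          measure_biUnion_finset_le _ _
        _ ≤ ∑ _b ∈ Finset.range (B'+1),
              ENNReal.ofReal (3 * D^nst * (P:ℝ)^nst * ((P:ℝ)⁻¹)^A) :=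
          Finset.sum_le_sum hrow
        _ = ENNReal.ofReal (((B':ℝ)+1) * (3 * D^nst * (P:ℝ)^nst * ((P:ℝ)⁻¹)^A)) := by
            rw [Finset.sum_const, Finset.card_range, nsmul_eq_mul]
            rw [show ((B'+1 : ℕ) : ENNReal) = ENNReal.ofReal ((B':ℝ)+1) by
              rw [← ENNReal.ofReal_natCast (B'+1)]
              congr 1
              push_cast; ring]
            rw [← ENNReal.ofReal_mul (by positivity)]
    refine le_trans hsum (ENNReal.ofReal_le_ofReal ?_)
    -- the main real-number estimate
    have hrpow : r ^ ((1:ℝ) - δ) = Real.exp (-((1:ℝ)-δ) * T) := by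
      rw [Real.rpow_def_of_pos hr0]
      congr 1
      have hlogr : Real.log r = -T := by
        rw [hTdef, one_div, Real.log_inv]; ring
      rw [hlogr]; ring
    have hTp : (T+1)^m ≤ C4 * Real.exp ((δ - δ') * T) := by
      have hstep : T + 1 ≤ max 1 ((m:ℝ)/(δ - δ')) * Real.exp ((δ - δ') * T / m) := by
        rcases le_or_gt 1 ((m:ℝ)/(δ - δ')) with hcase | hcase
        · have h2 : (δ - δ') * T / m + 1 ≤ Real.exp ((δ - δ') * T / m) :=
            Real.add_one_le_exp _
          have h3 : (0:ℝ) ≤ (δ - δ') * T / m := by positivity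
          calc T + 1 = ((m:ℝ)/(δ - δ')) * ((δ - δ') * T / m) + 1 := by
                field_simp
            _ ≤ ((m:ℝ)/(δ - δ')) * ((δ - δ') * T / m + 1) := by nlinarith only [hcase, h3]
            _ ≤ ((m:ℝ)/(δ - δ')) * Real.exp ((δ - δ') * T / m) :=
                mul_le_mul_of_nonneg_left h2 (by positivity)
            _ ≤ max 1 ((m:ℝ)/(δ - δ')) * Real.exp ((δ - δ') * T / m) :=
                mul_le_mul_of_nonneg_right (le_max_right _ _) (le_of_lt (Real.exp_pos _))
        · have h1 : T ≤ (δ - δ') * T / m := by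
            rw [le_div_iff₀ hm0]
            nlinarith only [(div_lt_iff₀ hcc0).1 hcase, hT0, hm0, hcc0]
          calc T + 1 ≤ Real.exp T := Real.add_one_le_exp T
            _ ≤ Real.exp ((δ - δ') * T / m) := Real.exp_le_exp.2 h1
            _ ≤ max 1 ((m:ℝ)/(δ - δ')) * Real.exp ((δ - δ') * T / m) := by
                nlinarith only [Real.exp_pos ((δ - δ') * T / m),
                  le_max_left (1:ℝ) ((m:ℝ)/(δ - δ'))]
      calc (T+1)^m ≤ (max 1 ((m:ℝ)/(δ - δ')) * Real.exp ((δ - δ') * T / m))^m :=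
          pow_le_pow_left₀ (by linarith only [hT0]) hstep m
        _ = C4 * Real.exp ((δ - δ') * T) := by
            rw [mul_pow, hC4eq, ← Real.exp_nat_mul]
            congr 2
            field_simp
    have hD4 : D^nst ≤ 4^nst * (T+1)^nst := by
      rw [← mul_pow]
      exact pow_le_pow_left₀ hD0 hDle nst
    have hT1m : ((B':ℝ)+1) * (T+1)^nst ≤ (T+1)^m := by
      rw [hmdef, pow_succ]
      calc ((B':ℝ)+1) * (T+1)^nst ≤ (T+1) * (T+1)^nst :=
          mul_le_mul_of_nonneg_right hB'1le (by positivity)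
        _ = (T+1)^nst * (T+1) := by ring
    have hmain : ((B':ℝ)+1) * (3 * D^nst * (P:ℝ)^nst * ((P:ℝ)⁻¹)^A)
        ≤ 3 * 4^nst * (P:ℝ)^nst * ((T+1)^m * ((P:ℝ)⁻¹)^A) := by
      have h1 : (0:ℝ) ≤ ((P:ℝ)⁻¹)^A := by positivity
      have h4 : (0:ℝ) ≤ ((B':ℝ)+1) := by positivity
      calc ((B':ℝ)+1) * (3 * D^nst * (P:ℝ)^nst * ((P:ℝ)⁻¹)^A)
          ≤ ((B':ℝ)+1) * (3 * (4^nst * (T+1)^nst) * (P:ℝ)^nst * ((P:ℝ)⁻¹)^A) := by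
            apply mul_le_mul_of_nonneg_left _ h4
            have h5 := mul_le_mul_of_nonneg_right hD4 (by positivity :
              (0:ℝ) ≤ (P:ℝ)^nst * ((P:ℝ)⁻¹)^A)
            nlinarith only [h5]
        _ = 3 * 4^nst * (P:ℝ)^nst * ((((B':ℝ)+1) * (T+1)^nst) * ((P:ℝ)⁻¹)^A) := by
            ring
        _ ≤ 3 * 4^nst * (P:ℝ)^nst * ((T+1)^m * ((P:ℝ)⁻¹)^A) := by
            apply mul_le_mul_of_nonneg_left _ (by positivity)
            exact mul_le_mul_of_nonneg_right hT1m h1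
    calc ((B':ℝ)+1) * (3 * D^nst * (P:ℝ)^nst * ((P:ℝ)⁻¹)^A)
        ≤ 3 * 4^nst * (P:ℝ)^nst * ((T+1)^m * ((P:ℝ)⁻¹)^A) := hmain
      _ ≤ 3 * 4^nst * (P:ℝ)^nst * ((C4 * Real.exp ((δ - δ')*T)) * Real.exp (-((1-δ') * T))) := by
          apply mul_le_mul_of_nonneg_left _ (by positivity)
          apply mul_le_mul hTp hPAinv (by positivity) (by positivity)
      _ = (3 * 4^nst * (P:ℝ)^nst * C4) * Real.exp (-(1-δ) * T) := by
          have hee : Real.exp ((δ - δ')*T) * Real.exp (-((1-δ') * T))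
              = Real.exp (-(1-δ) * T) := by
            rw [← Real.exp_add]
            congr 1
            ring
          rw [← hee]
          ring
      _ ≤ B * r ^ ((1:ℝ) - δ) := by
          rw [hrpow]
          rw [show -((1:ℝ)-δ) * T = -(1-δ) * T by ring]
          apply mul_le_mul_of_nonneg_right _ (le_of_lt (Real.exp_pos _))
          rw [hBeq]
          linarith only [Real.exp_pos (-(1-δ) * T)]
  · -- the good-side bound
    intro y hy
    obtain ⟨hyIcc, hyE⟩ := hy
    -- each row has many big elements
    have hrowbig : ∀ b, b ∈ Finset.range (B'+1) →
        nst + 1 ≤ ((Finset.range A).filter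
          (fun a => ε ≤ nintDist ((Q:ℝ)^b * (P:ℝ)^a * y))).card := by
      intro b hb
      by_contra hcon
      push_neg at hcon
      apply hyE
      rw [hEdef]
      refine Set.mem_biUnion hb ⟨hyIcc, ?_⟩
      refine ⟨(Finset.range A).filter (fun a => ε ≤ nintDist ((Q:ℝ)^b * (P:ℝ)^a * y)),
        by omega, ?_⟩
      intro a ha haF
      by_contra hcon2
      push_neg at hcon2
      exact haF (Finset.mem_filter.2 ⟨Finset.mem_range.2 ha, hcon2⟩)
    -- finiteness of multiSr
    have hfin : (multiSr 2 p r).Finite := by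
      apply Set.Finite.subset (Set.finite_Iic ⌈1/r⌉₊)
      intro h hh
      obtain ⟨_, hle⟩ := hh
      simp only [Set.mem_Iic]
      have h1 : (h:ℝ) ≤ 1/r := by
        rw [le_div_iff₀ hr0]; exact hle
      have h2 : (h:ℝ) ≤ (⌈1/r⌉₊ : ℝ) := le_trans h1 (Nat.le_ceil _)
      exact_mod_cast h2
    -- rewrite the tsum as a finite sum
    have htsum : ∑' h : multiSr 2 p r, nintDist (((h : ℕ) : ℝ) * y) ^ 2
        = ∑ h ∈ hfin.toFinset, nintDist ((h : ℝ) * y) ^ 2 := by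
      have h1 := tsum_subtype (multiSr 2 p r) (fun n : ℕ => nintDist ((n:ℝ) * y) ^ 2)
      calc ∑' h : multiSr 2 p r, nintDist (((h : ℕ) : ℝ) * y) ^ 2
          = ∑' (n : ℕ), Set.indicator (multiSr 2 p r)
              (fun n : ℕ => nintDist ((n:ℝ) * y) ^ 2) n := h1
        _ = ∑ h ∈ hfin.toFinset, Set.indicator (multiSr 2 p r)
              (fun n : ℕ => nintDist ((n:ℝ) * y) ^ 2) h := by
            apply tsum_eq_sum
            intro h hh
            apply Set.indicator_of_notMem
            intro hmem
            exact hh (hfin.mem_toFinset.2 hmem)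
        _ = ∑ h ∈ hfin.toFinset, nintDist ((h : ℝ) * y) ^ 2 := by
            apply Finset.sum_congr rfl
            intro h hh
            exact Set.indicator_of_mem (hfin.mem_toFinset.1 hh) _
    rw [htsum]
    -- the image of the grid is inside the finite set
    have himgsub : (Finset.range (B'+1) ×ˢ Finset.range A).image
        (fun ab => P^ab.2 * Q^ab.1) ⊆ hfin.toFinset := by
      intro h hh
      obtain ⟨⟨b, a⟩, habG, hab⟩ := Finset.mem_image.1 hh
      obtain ⟨hbmem, hamem⟩ := Finset.mem_product.1 habG
      rw [hfin.mem_toFinset]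
      constructor
      · refine ⟨![a, b], ?_⟩
        rw [← hab]
        rw [Fin.prod_univ_two]
        simp only [Matrix.cons_val_zero, Matrix.cons_val_one, Matrix.head_cons]
        rw [hPdef, hQdef]
      · have ha : a ≤ A1 := by
          have := Finset.mem_range.1 hamem
          omega
        have hb : b ≤ B' := by
          have := Finset.mem_range.1 hbmem
          omega
        have h3 : ((P^a * Q^b : ℕ) : ℝ) ≤ 1/r := by
          push_cast
          calc (P:ℝ)^a * (Q:ℝ)^b ≤ Real.exp ((1-δ')*T) * Real.exp (δ'*T) :=
              mul_le_mul (hPA1 a ha) (hQB' b hb) (by positivity) (by positivity)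
            _ = Real.exp T := by rw [← Real.exp_add]; ring_nf
            _ = 1/r := hexpT
        rw [← hab]
        exact (le_div_iff₀ hr0).1 h3
    -- injectivity on the grid
    have hinj : ∀ x ∈ Finset.range (B'+1) ×ˢ Finset.range A,
        ∀ x' ∈ Finset.range (B'+1) ×ˢ Finset.range A,
        (fun ab : ℕ × ℕ => P^ab.2 * Q^ab.1) x = (fun ab => P^ab.2 * Q^ab.1) x' → x = x' := by
      intro x _ x' _ hxy
      have := pow_mul_pow_inj hP2 (by omega) hcoPQ x.2 x.1 x'.2 x'.1 hxy
      exact Prod.ext this.2 this.1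
    -- lower bound on the sum
    have hbound1 : ∑ ab ∈ Finset.range (B'+1) ×ˢ Finset.range A,
            nintDist (((P^ab.2 * Q^ab.1 : ℕ) : ℝ) * y) ^ 2
        ≤ ∑ h ∈ hfin.toFinset, nintDist ((h : ℝ) * y) ^ 2 := by
      have he : ∑ ab ∈ Finset.range (B'+1) ×ˢ Finset.range A,
            nintDist (((P^ab.2 * Q^ab.1 : ℕ) : ℝ) * y) ^ 2
          = ∑ h ∈ (Finset.range (B'+1) ×ˢ Finset.range A).image
              (fun ab => P^ab.2 * Q^ab.1), nintDist ((h : ℝ) * y) ^ 2 :=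
        (Finset.sum_image (f := fun n : ℕ => nintDist ((n:ℝ) * y)^2) hinj).symm
      rw [he]
      apply Finset.sum_le_sum_of_subset_of_nonneg himgsub
      intro h _ _
      positivity
    have hbound2 : ∀ b ∈ Finset.range (B'+1),
        ((nst:ℝ)+1) * ε^2 ≤ ∑ a ∈ Finset.range A, nintDist (((P^a * Q^b : ℕ) : ℝ) * y) ^ 2 := by
      intro b hb
      have hbig := hrowbig b hb
      have hsubfil : (Finset.range A).filter
          (fun a => ε ≤ nintDist ((Q:ℝ)^b * (P:ℝ)^a * y)) ⊆ Finset.range A :=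
        Finset.filter_subset _ _
      calc ((nst:ℝ)+1) * ε^2
          ≤ (((Finset.range A).filter
              (fun a => ε ≤ nintDist ((Q:ℝ)^b * (P:ℝ)^a * y))).card : ℝ) * ε^2 := by
            apply mul_le_mul_of_nonneg_right _ (by positivity)
            have : ((nst + 1 : ℕ):ℝ) ≤ (((Finset.range A).filter
                (fun a => ε ≤ nintDist ((Q:ℝ)^b * (P:ℝ)^a * y))).card : ℝ) := by
              exact_mod_cast hbig
            push_cast at this ⊢
            linarith only [this]
        _ ≤ ∑ a ∈ (Finset.range A).filter
              (fun a => ε ≤ nintDist ((Q:ℝ)^b * (P:ℝ)^a * y)),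
              nintDist (((P^a * Q^b : ℕ) : ℝ) * y) ^ 2 := by
            rw [← nsmul_eq_mul]
            apply Finset.card_nsmul_le_sum
            intro a ha
            have hax := (Finset.mem_filter.1 ha).2
            have hcast : ((P^a * Q^b : ℕ) : ℝ) * y = (Q:ℝ)^b * (P:ℝ)^a * y := by
              push_cast; ring
            rw [hcast]
            exact pow_le_pow_left₀ (le_of_lt hε0) hax 2
        _ ≤ ∑ a ∈ Finset.range A, nintDist (((P^a * Q^b : ℕ) : ℝ) * y) ^ 2 := by
            apply Finset.sum_le_sum_of_subset_of_nonneg hsubfil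
            intro a _ _
            positivity
    have hbound3 : ((B':ℝ)+1) * (((nst:ℝ)+1) * ε^2)
        ≤ ∑ ab ∈ Finset.range (B'+1) ×ˢ Finset.range A,
            nintDist (((P^ab.2 * Q^ab.1 : ℕ) : ℝ) * y) ^ 2 := by
      rw [Finset.sum_product]
      calc ((B':ℝ)+1) * (((nst:ℝ)+1) * ε^2)
          = ∑ _b ∈ Finset.range (B'+1), (((nst:ℝ)+1) * ε^2) := by
            rw [Finset.sum_const, Finset.card_range, nsmul_eq_mul]
            push_cast; ring
        _ ≤ _ := Finset.sum_le_sum hbound2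
    -- arithmetic conclusion
    have hfinal : K * T ≤ ((B':ℝ)+1) * (((nst:ℝ)+1) * ε^2) := by
      have h1 : δ' * T / Real.log Q ≤ ((B':ℝ)+1) := by linarith only [hB'gt]
      have h2 : K * Real.log Q / (ε^2 * δ') ≤ ((nst:ℝ)+1) := by linarith only [hnstge]
      have h3 : (0:ℝ) ≤ δ' * T / Real.log Q := hypos
      have h4 : (0:ℝ) ≤ K * Real.log Q / (ε^2 * δ') := by positivity
      have h5 : (δ' * T / Real.log Q) * (K * Real.log Q / (ε^2 * δ') * ε^2)
          ≤ ((B':ℝ)+1) * (((nst:ℝ)+1) * ε^2) := by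
        have h6 : K * Real.log Q / (ε^2 * δ') * ε^2 ≤ ((nst:ℝ)+1) * ε^2 :=
          mul_le_mul_of_nonneg_right h2 (by positivity)
        apply mul_le_mul h1 h6 (by positivity) (by positivity)
      have h7 : (δ' * T / Real.log Q) * (K * Real.log Q / (ε^2 * δ') * ε^2) = K * T := by
        field_simp
      linarith only [h5, h7]
    rw [hTdef] at hfinal
    calc K * Real.log (1/r) ≤ ((B':ℝ)+1) * (((nst:ℝ)+1) * ε^2) := hfinal
      _ ≤ ∑ ab ∈ Finset.range (B'+1) ×ˢ Finset.range A,
            nintDist (((P^ab.2 * Q^ab.1 : ℕ) : ℝ) * y) ^ 2 := hbound3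
      _ ≤ ∑ h ∈ hfin.toFinset, nintDist ((h : ℝ) * y) ^ 2 := hbound1

end
end

section
/- There exist a constant c₁ > 0 (depending only on m and the bases p₁, …, p_m) and r₀ > 0 such that for every 0 < r < r₀ and all coprime integers a and q with 1 ≤ q ≤ r^{−2/3}, the number of elements h₁ ∈ S(r^{1/3}) with ‖a·h₁/q‖ ≥ 1/q is at least c₁ · (log q) · (log(1/r))^{m−1}. -/
open Filter Set

noncomputable section

lemma prodpow_injective (m : ℕ) (p : Fin m → ℕ) (hp : ∀ j, 1 < p j)
    (hcop : ∀ i j, i ≠ j → Nat.Coprime (p i) (p j)) :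
    Function.Injective (fun α : Fin m → ℕ => ∏ j, p j ^ α j) := by
  have hpne : ∀ j, p j ≠ 0 := fun j => by have := hp j; omega
  have key : ∀ (α : Fin m → ℕ) (j : Fin m),
      (∏ k, p k ^ α k).factorization (p j).minFac = α j * (p j).factorization (p j).minFac := by
    intro α j
    have hℓp : ((p j).minFac).Prime := Nat.minFac_prime (by have := hp j; omega)
    rw [Nat.factorization_prod (fun k _ => pow_ne_zero _ (hpne k))]
    rw [Finset.sum_apply']
    rw [Finset.sum_eq_single j]
    · rw [Nat.factorization_pow]; simp
    · intro k _ hkj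
      rw [Nat.factorization_pow]
      simp only [Finsupp.smul_apply, smul_eq_mul]
      have : (p k).factorization (p j).minFac = 0 := by
        apply Nat.factorization_eq_zero_of_not_dvd
        intro hdvd
        have h1 : (p j).minFac ∣ p j := Nat.minFac_dvd _
        have := Nat.Coprime.eq_one_of_dvd (Nat.Coprime.coprime_dvd_left hdvd (hcop k j hkj)) h1
        exact hℓp.one_lt.ne' this
      simp [this]
    · simp
  intro α β hab
  simp only at hab
  funext j
  have h1 := key α j
  have h2 := key β j
  rw [hab, h2] at h1
  have hpos : 0 < (p j).factorization (p j).minFac :=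
    (Nat.minFac_prime (by have := hp j; omega)).factorization_pos_of_dvd (hpne j) (Nat.minFac_dvd _)
  exact Nat.eq_of_mul_eq_mul_right hpos h1.symm

lemma exists_good_index (m : ℕ) (hm : 0 < m) (p : Fin m → ℕ) (hp : ∀ j, 1 < p j)
    (hcop : ∀ i j, i ≠ j → Nat.Coprime (p i) (p j)) (q : ℕ) (hq : 1 ≤ q) :
    ∃ i : Fin m, ∀ α : Fin m → ℕ, q ∣ ∏ j, p j ^ α j → q ≤ p i ^ (α i * m) := by
  by_cases hA : ∃ ℓ ∈ q.primeFactors, ∀ j, ¬ ℓ ∣ p j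
  · obtain ⟨ℓ, hℓq, hℓ⟩ := hA
    have hℓp : ℓ.Prime := Nat.prime_of_mem_primeFactors hℓq
    refine ⟨⟨0, hm⟩, fun α hdvd => ?_⟩
    exfalso
    have hcon : ℓ ∣ ∏ j, p j ^ α j := (Nat.dvd_of_mem_primeFactors hℓq).trans hdvd
    obtain ⟨j, _, hj⟩ := (Prime.dvd_finset_prod_iff hℓp.prime _).mp hcon
    exact hℓ j (hℓp.dvd_of_dvd_pow hj)
  · push_neg at hA
    set Q : Fin m → ℕ := fun j => ∏ ℓ ∈ q.primeFactors, ℓ ^ (if ℓ ∣ p j then q.factorization ℓ else 0) with hQ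
    have hqprod : ∏ j, Q j = q := by
      rw [hQ]
      rw [Finset.prod_comm]
      conv_rhs => rw [← Nat.factorization_prod_pow_eq_self (by omega : q ≠ 0)]
      rw [Nat.prod_factorization_eq_prod_primeFactors]
      apply Finset.prod_congr rfl
      intro ℓ hℓ
      rw [Finset.prod_pow_eq_pow_sum]
      congr 1
      obtain ⟨j0, hj0⟩ := hA ℓ hℓ
      rw [Finset.sum_eq_single j0]
      · simp [hj0]
      · intro k _ hkj
        have : ¬ ℓ ∣ p k := by
          intro hdvd
          have hℓp : ℓ.Prime := Nat.prime_of_mem_primeFactors hℓ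
          have := Nat.Coprime.eq_one_of_dvd (Nat.Coprime.coprime_dvd_left hdvd (hcop k j0 hkj)) hj0
          exact hℓp.one_lt.ne' this
        simp [this]
      · simp
    obtain ⟨i, _, hi⟩ := Finset.exists_max_image Finset.univ Q ⟨⟨0, hm⟩, Finset.mem_univ _⟩
    refine ⟨i, fun α hdvd => ?_⟩
    have hQiq : Q i ∣ q := hqprod ▸ Finset.dvd_prod_of_mem Q (Finset.mem_univ i)
    have hQih : Q i ∣ p i ^ α i := by
      have h1 : Q i ∣ p i ^ α i * ∏ j ∈ Finset.univ.erase i, p j ^ α j := by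
        rw [Finset.mul_prod_erase Finset.univ (fun j => p j ^ α j) (Finset.mem_univ i)]
        exact hQiq.trans hdvd
      refine Nat.Coprime.dvd_of_dvd_mul_right ?_ h1
      apply Nat.Coprime.prod_right
      intro j hj
      have hji : j ≠ i := (Finset.mem_erase.mp hj).1
      apply Nat.Coprime.prod_left
      intro ℓ hℓ
      by_cases hd : ℓ ∣ p i
      · apply Nat.Coprime.pow
        have hℓp : ℓ.Prime := Nat.prime_of_mem_primeFactors hℓ
        rw [hℓp.coprime_iff_not_dvd]
        intro hdj
        have := Nat.Coprime.eq_one_of_dvd (Nat.Coprime.coprime_dvd_left hd (hcop i j hji.symm)) hdj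
        exact hℓp.one_lt.ne' this
      · simp [hd, Nat.coprime_one_left]
    have hQile : Q i ≤ p i ^ α i := Nat.le_of_dvd (pow_pos (by have := hp i; omega) _) hQih
    calc q = ∏ j, Q j := hqprod.symm
      _ ≤ ∏ _j : Fin m, Q i := Finset.prod_le_prod' (fun j _ => hi j (Finset.mem_univ j))
      _ = Q i ^ m := by rw [Finset.prod_const, Finset.card_univ, Fintype.card_fin]
      _ ≤ (p i ^ α i) ^ m := Nat.pow_le_pow_left hQile m
      _ = p i ^ (α i * m) := by rw [← pow_mul]

lemma nintDist_ge (k : ℤ) (q : ℕ) (hq : 0 < q) (h : ¬ (q:ℤ) ∣ k) :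
    1/(q:ℝ) ≤ nintDist ((k:ℝ)/q) := by
  have hq0 : (0:ℝ) < q := by exact_mod_cast hq
  set n := round ((k:ℝ)/q) with hn
  have hne : k - q * n ≠ 0 := by
    intro hcon
    exact h ⟨n, by omega⟩
  have h1 : (1:ℝ) ≤ |((k - q*n : ℤ) : ℝ)| := by
    rw [← Int.cast_abs]
    exact_mod_cast Int.one_le_abs hne
  have h2 : nintDist ((k:ℝ)/q) = |((k - q*n : ℤ) : ℝ)| / q := by
    rw [nintDist, ← hn]
    rw [← abs_of_pos hq0, ← abs_div]
    congr 1
    push_cast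
    field_simp
    rw [abs_of_pos hq0]; ring
  rw [h2]
  gcongr

set_option maxHeartbeats 1000000 in
theorem multiSr_many_elements_far_from_integers_rational (m : ℕ) (p : Fin m → ℕ)
    (hm : 2 ≤ m) (hp : ∀ j, 1 < p j) (hmono : StrictMono p)
    (hcop : ∀ i j, i ≠ j → Nat.Coprime (p i) (p j)) :
    ∃ c₁ > (0 : ℝ), ∃ r₀ > (0 : ℝ), ∀ r : ℝ, 0 < r → r < r₀ →
      ∀ a : ℤ, ∀ q : ℕ, 1 ≤ q → (q : ℝ) ≤ r ^ (-(2 : ℝ) / 3) → IsCoprime a (q : ℤ) →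
        c₁ * Real.log q * (Real.log (1 / r)) ^ (m - 1) ≤
          (({h₁ ∈ multiSr m p (r ^ ((1 : ℝ) / 3)) |
              1 / (q : ℝ) ≤ nintDist ((a : ℝ) * (h₁ : ℝ) / (q : ℝ))}).ncard : ℝ) := by
  have hm0 : 0 < m := by omega
  set P : ℕ := p ⟨m-1, by omega⟩ with hPdef
  have hplast : ∀ j, p j ≤ P := by
    intro j
    exact hmono.monotone (by exact Fin.le_def.mpr (by have := j.isLt; simp; omega))
  set LP := Real.log P with hLPdef
  have hLPpos : 0 < LP := Real.log_pos (by exact_mod_cast hp _)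
  have hlp : ∀ j, 0 < Real.log (p j) := fun j => Real.log_pos (by exact_mod_cast hp j)
  have hlpLP : ∀ j, Real.log (p j) ≤ LP :=
    fun j => Real.log_le_log (by exact_mod_cast Nat.zero_lt_of_lt (hp j)) (by exact_mod_cast hplast j)
  have hmr : (0:ℝ) < m := by exact_mod_cast hm0
  have h2m : (0:ℝ) < 2*(m:ℝ)*LP := mul_pos (mul_pos two_pos hmr) hLPpos
  have h3m : (0:ℝ) < 3*(m:ℝ)*LP := mul_pos (mul_pos three_pos hmr) hLPpos
  refine ⟨(2*m*LP*(3*m*LP)^(m-1))⁻¹, inv_pos.mpr (mul_pos h2m (pow_pos h3m _)), 1, one_pos, ?_⟩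
  intro r hr0 hr1 a q hq1 hqr hco
  rcases eq_or_lt_of_le hq1 with hq | hq2
  · rw [← hq]
    simp only [Nat.cast_one, Real.log_one, mul_zero, zero_mul]
    positivity
  -- main case: 2 ≤ q
  have hq0 : (0:ℝ) < q := by positivity
  have hq0' : (1:ℝ) < q := by exact_mod_cast hq2
  set Lr := Real.log (1/r) with hLrdef
  have hLrpos : 0 < Lr := Real.log_pos (by rw [lt_div_iff₀ hr0]; linarith)
  have hlogq0 : 0 < Real.log q := Real.log_pos hq0'
  have hlogq : Real.log q ≤ 2/3 * Lr := by
    have := Real.log_le_log hq0 hqr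
    rw [Real.log_rpow hr0] at this
    have hinv : Lr = - Real.log r := by rw [hLrdef, one_div, Real.log_inv]
    linarith
  set L := Lr / 3 with hLdef
  have hLpos : 0 < L := by positivity
  set A : Fin m → ℕ := fun j => ⌊L / (m * Real.log (p j))⌋₊ with hAdef
  obtain ⟨i, hi⟩ := exists_good_index m hm0 p hp hcop q hq1
  set K := ⌈Real.log q / (m * Real.log (p i))⌉₊ with hKdef
  set c : Fin m → ℕ := fun j => if j = i then min K (A i + 1) else A j + 1 with hcdef
  set f : (Fin m → ℕ) → ℕ := fun α => ∏ j, p j ^ α j with hfdef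
  set D := Fintype.piFinset (fun j => Finset.range (c j)) with hDdef
  set T : Set ℕ := {h₁ ∈ multiSr m p (r ^ ((1 : ℝ) / 3)) |
      1 / (q : ℝ) ≤ nintDist ((a : ℝ) * (h₁ : ℝ) / (q : ℝ))} with hTdef
  have hrp : (0:ℝ) < r ^ ((1:ℝ)/3) := Real.rpow_pos_of_pos hr0 _
  -- members of D map into T
  have hmapsto : ∀ α ∈ D, f α ∈ T := by
    intro α hα
    rw [hDdef, Fintype.mem_piFinset] at hα
    have hαlt : ∀ j, α j < c j := fun j => Finset.mem_range.mp (hα j)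
    have hαA : ∀ j, α j ≤ A j := by
      intro j
      have := hαlt j
      by_cases hji : j = i
      · subst hji
        simp only [hcdef, if_pos rfl] at this
        have := lt_of_lt_of_le this (min_le_right _ _)
        omega
      · simp only [hcdef, if_neg hji] at this
        omega
    have hαiK : α i < K := by
      have := hαlt i
      simp only [hcdef, if_pos rfl] at this
      exact lt_of_lt_of_le this (min_le_left _ _)
    have hfpos : 0 < f α := by
      rw [hfdef]
      exact Finset.prod_pos fun j _ => pow_pos (by have := hp j; omega) _
    have hcast : ((f α : ℕ) : ℝ) = ∏ j, (p j:ℝ) ^ (α j) := by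
      rw [hfdef]; push_cast; rfl
    -- size bound
    have hsize : ((f α : ℕ) : ℝ) ≤ Real.exp L := by
      rw [hcast]
      have hfpos' : (0:ℝ) < ∏ j, (p j:ℝ) ^ (α j) :=
        Finset.prod_pos fun j _ => pow_pos (by exact_mod_cast Nat.zero_lt_of_lt (hp j)) _
      rw [← Real.exp_log hfpos', Real.exp_le_exp]
      rw [Real.log_prod (fun j _ =>
        ne_of_gt (pow_pos (by exact_mod_cast Nat.zero_lt_of_lt (hp j) : (0:ℝ) < p j) _))]
      have hterm : ∀ j ∈ Finset.univ, Real.log ((p j:ℝ) ^ α j) ≤ L / m := by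
        intro j _
        rw [Real.log_pow]
        have h1 : (α j : ℝ) ≤ L / (m * Real.log (p j)) := by
          calc (α j : ℝ) ≤ (A j : ℝ) := by exact_mod_cast hαA j
            _ ≤ L / (m * Real.log (p j)) := Nat.floor_le (by positivity)
        calc (α j : ℝ) * Real.log (p j) ≤ (L / (m * Real.log (p j))) * Real.log (p j) := by
              apply mul_le_mul_of_nonneg_right h1 (hlp j).le
          _ = L / m := by
              have hxne : Real.log ((p j:ℕ):ℝ) ≠ 0 := (hlp j).ne'
              have hmne : (m:ℝ) ≠ 0 := hmr.ne'
              field_simp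
      calc ∑ j, Real.log ((p j:ℝ) ^ α j) ≤ ∑ _j : Fin m, L / m :=
            Finset.sum_le_sum hterm
        _ = m * (L / m) := by rw [Finset.sum_const, Finset.card_univ, Fintype.card_fin]; ring
        _ = L := by field_simp
    have hexpL : Real.exp L * r ^ ((1:ℝ)/3) = 1 := by
      have h1 : Real.exp L = r ^ (-(1:ℝ)/3) := by
        rw [Real.rpow_def_of_pos hr0]
        congr 1
        rw [hLdef, hLrdef, one_div, Real.log_inv]
        ring
      rw [h1, ← Real.rpow_add hr0]
      norm_num
    have hmem1 : f α ∈ multiSr m p (r ^ ((1:ℝ)/3)) := by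
      refine ⟨⟨α, rfl⟩, ?_⟩
      calc ((f α : ℕ):ℝ) * r ^ ((1:ℝ)/3) ≤ Real.exp L * r ^ ((1:ℝ)/3) := by
            apply mul_le_mul_of_nonneg_right hsize hrp.le
        _ = 1 := hexpL
    -- not divisible
    have hndvd : ¬ q ∣ f α := by
      intro hdvd
      have hle := hi α hdvd
      have hlt : (p i:ℝ) ^ (α i * m) < q := by
        have hb : (0:ℝ) < (p i:ℝ) ^ (α i * m) :=
          pow_pos (by exact_mod_cast Nat.zero_lt_of_lt (hp i)) _
        rw [← Real.log_lt_log_iff hb hq0, Real.log_pow]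
        have hαr : (α i : ℝ) < Real.log q / (m * Real.log (p i)) := Nat.lt_ceil.mp hαiK
        have hd : (0:ℝ) < m * Real.log (p i) := by have := hlp i; positivity
        rw [lt_div_iff₀ hd] at hαr
        push_cast
        nlinarith [hlp i]
      have : (q:ℝ) ≤ (p i:ℝ) ^ (α i * m) := by exact_mod_cast hle
      linarith
    have hndvd' : ¬ (q:ℤ) ∣ (a * (f α : ℕ)) := by
      intro hd
      exact hndvd (Int.natCast_dvd_natCast.mp (hco.symm.dvd_of_dvd_mul_left hd))
    have hnd := nintDist_ge (a * (f α : ℕ)) q (by omega) hndvd'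
    have hmem2 : 1 / (q:ℝ) ≤ nintDist ((a:ℝ) * ((f α : ℕ):ℝ) / q) := by
      convert hnd using 3
      push_cast
      ring
    exact ⟨hmem1, hmem2⟩
  -- T is finite
  have hTfin : T.Finite := by
    apply Set.Finite.subset (Set.finite_Iic ⌈(r ^ ((1:ℝ)/3))⁻¹⌉₊)
    intro h hh
    have hb : (h:ℝ) * r ^ ((1:ℝ)/3) ≤ 1 := hh.1.2
    have h2 : (h:ℝ) ≤ (r ^ ((1:ℝ)/3))⁻¹ := by
      rw [← one_div, le_div_iff₀ hrp]
      exact hb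
    have h3 : (h:ℝ) ≤ (⌈(r ^ ((1:ℝ)/3))⁻¹⌉₊ : ℝ) := h2.trans (Nat.le_ceil _)
    exact Set.mem_Iic.mpr (by exact_mod_cast h3)
  -- cardinality lower bound
  have hinj : Function.Injective f := prodpow_injective m p hp hcop
  have hsub : ↑(D.image f) ⊆ T := by
    intro h hh
    rw [Finset.coe_image] at hh
    obtain ⟨α, hα, rfl⟩ := hh
    exact hmapsto α hα
  have hcard : (∏ j, c j) ≤ T.ncard := by
    calc ∏ j, c j = D.card := by
          rw [hDdef, Fintype.card_piFinset]
          simp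
      _ = (D.image f).card := (Finset.card_image_of_injective D hinj).symm
      _ = (↑(D.image f) : Set ℕ).ncard := (Set.ncard_coe_finset _).symm
      _ ≤ T.ncard := Set.ncard_le_ncard hsub hTfin
  -- real-valued lower bound on the product
  set b : Fin m → ℝ := fun j => if j = i then Real.log q / (2*m*LP) else Lr / (3*m*LP) with hbdef
  have hb0 : ∀ j ∈ Finset.univ, 0 ≤ b j := by
    intro j _
    rw [hbdef]
    by_cases hji : j = i
    · simp only [hji, if_pos rfl]
      exact div_nonneg hlogq0.le h2m.le
    · simp only [if_neg hji]
      exact div_nonneg hLrpos.le h3m.le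
  have hAL : ∀ j, L / (m * LP) ≤ ((A j : ℝ) + 1) := by
    intro j
    have h1 : L / (m * LP) ≤ L / (m * Real.log (p j)) := by
      apply div_le_div_of_nonneg_left hLpos.le (mul_pos hmr (hlp j))
      exact mul_le_mul_of_nonneg_left (hlpLP j) hmr.le
    have h2 : L / (m * Real.log (p j)) < (A j : ℝ) + 1 := by
      rw [hAdef]
      exact Nat.lt_floor_add_one _
    linarith
  have hbc : ∀ j ∈ Finset.univ, b j ≤ (c j : ℝ) := by
    intro j _
    by_cases hji : j = i
    · subst hji
      rw [hbdef, hcdef]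
      simp only [eq_self_iff_true, if_true]
      have hmin : ((min K (A j + 1) : ℕ) : ℝ) = min (K:ℝ) (((A j : ℕ):ℝ) + 1) := by
        rw [Nat.cast_min]; push_cast; rfl
      rw [hmin]
      apply le_min
      · calc Real.log q / (2*m*LP) ≤ Real.log q / (m * Real.log (p j)) := by
              apply div_le_div_of_nonneg_left hlogq0.le (mul_pos hmr (hlp j))
              nlinarith [hlpLP j, hlp j, hLPpos, hmr]
          _ ≤ (K : ℝ) := Nat.le_ceil _
      · calc Real.log q / (2*m*LP) ≤ L / (m * LP) := by
              rw [hLdef]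
              rw [div_le_div_iff₀ (by positivity) (by positivity)]
              have hm1 : (1:ℝ) ≤ (m:ℝ) := by exact_mod_cast hm0
              nlinarith [hlogq, hLrpos, hLPpos]
          _ ≤ (A j : ℝ) + 1 := hAL j
    · rw [hbdef, hcdef]
      simp only [if_neg hji]
      have : Lr / (3*m*LP) = L / (m * LP) := by rw [hLdef]; ring
      rw [this]
      push_cast
      exact hAL j
  have hprodb : (∏ j, b j) ≤ (∏ j, (c j : ℝ)) := Finset.prod_le_prod hb0 hbc
  have hprodb_eq : (∏ j, b j) = (Real.log q / (2*m*LP)) * (Lr / (3*m*LP)) ^ (m-1) := by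
    rw [← Finset.mul_prod_erase Finset.univ b (Finset.mem_univ i)]
    congr 1
    · rw [hbdef]; simp
    · have hconst : ∀ j ∈ Finset.univ.erase i, b j = Lr / (3*m*LP) := by
        intro j hj
        rw [hbdef]
        simp only [if_neg (Finset.mem_erase.mp hj).1]
      rw [Finset.prod_congr rfl hconst, Finset.prod_const,
        Finset.card_erase_of_mem (Finset.mem_univ i), Finset.card_univ, Fintype.card_fin]
  have hfinal : (2*m*LP*(3*m*LP)^(m-1))⁻¹ * Real.log q * Lr ^ (m-1) = ∏ j, b j := by
    rw [hprodb_eq, div_pow]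
    have hne1 : (2*(m:ℝ)*LP) ≠ 0 := h2m.ne'
    have hne2 : ((3*(m:ℝ)*LP)^(m-1)) ≠ 0 := (pow_pos h3m _).ne'
    field_simp
  have hcastprod : ((∏ j, c j : ℕ) : ℝ) = ∏ j, (c j : ℝ) := by push_cast; rfl
  calc (2*(m:ℝ)*LP*(3*m*LP)^(m-1))⁻¹ * Real.log q * Lr ^ (m-1)
      = ∏ j, b j := hfinal
    _ ≤ ∏ j, (c j : ℝ) := hprodb
    _ = ((∏ j, c j : ℕ) : ℝ) := hcastprod.symm
    _ ≤ (T.ncard : ℝ) := by exact_mod_cast hcard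


end
end
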